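/- Binomial weight inequality: let p > 1 and q its conjugate exponent, and define w_k = C(k − 1 − 1/p, k − 1) (generalized binomial coefficient) for k ∈ ℕ. Then (w_n) is positive and decreasing, and for every k ∈ ℕ: (w_1 + w_2 + ... + w_k)^{p−1} < (kq)^p (w_k^{p−1} − w_{k+1}^{p−1}). -/

import Mathlib

open Real Finset

private lemma amgm2 {a b θ : ℝ} (ha : 0 < a) (hb : 0 < b) (hab : a ≠ b)
    (h0 : 0 < θ) (h1 : θ < 1) : a ^ θ * b ^ (1 - θ) < θ * a + (1 - θ) * b := by
  have hpos : 0 < θ * a + (1 - θ) * b := by nlinarith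
  have hlog := strictConcaveOn_log_Ioi.2 (Set.mem_Ioi.2 ha) (Set.mem_Ioi.2 hb) hab
    h0 (show (0:ℝ) < 1 - θ by linarith) (by ring)
  have hlt : θ * Real.log a + (1 - θ) * Real.log b < Real.log (θ * a + (1 - θ) * b) := by
    simpa [smul_eq_mul] using hlog
  calc a ^ θ * b ^ (1 - θ)
      = Real.exp (θ * Real.log a + (1 - θ) * Real.log b) := by
        rw [Real.exp_add, Real.rpow_def_of_pos ha, Real.rpow_def_of_pos hb]
        ring_nf
    _ < Real.exp (Real.log (θ * a + (1 - θ) * b)) := Real.exp_lt_exp.2 hlt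
    _ = θ * a + (1 - θ) * b := Real.exp_log hpos

private lemma key {p x : ℝ} (hp : 1 < p) (hx0 : 0 < x) (hx1 : x < 1) :
    (1 - x) ^ (p - 1) * (1 + (p - 1) * x) < 1 := by
  have hp0 : 0 < p := by linarith
  have ha : 0 < 1 - x := by linarith
  have hb : 0 < 1 + (p - 1) * x := by nlinarith
  set θ : ℝ := (p - 1) / p with hθ
  have hθ0 : 0 < θ := div_pos (by linarith) hp0
  have hθ1 : θ < 1 := by rw [hθ, div_lt_one hp0]; linarith
  have hne : (1 - x) ≠ 1 + (p - 1) * x := by nlinarith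
  have h := amgm2 ha hb hne hθ0 hθ1
  have h1θ : 1 - θ = 1 / p := by rw [hθ]; field_simp; ring
  have hsum : θ * (1 - x) + (1 - θ) * (1 + (p - 1) * x) = 1 := by
    rw [h1θ, hθ]; field_simp; ring
  rw [hsum] at h
  have hrw : ((1 - x) ^ (p - 1) * (1 + (p - 1) * x)) ^ (1 / p)
      = (1 - x) ^ θ * (1 + (p - 1) * x) ^ (1 - θ) := by
    have e1 : (p - 1) * (1 / p) = θ := by rw [hθ]; field_simp
    rw [Real.mul_rpow (by positivity) hb.le, ← Real.rpow_mul ha.le, e1, ← h1θ]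
  have hlt1 : ((1 - x) ^ (p - 1) * (1 + (p - 1) * x)) ^ (1 / p) < 1 := by rw [hrw]; exact h
  by_contra hcon
  push_neg at hcon
  have : (1:ℝ) ≤ ((1 - x) ^ (p - 1) * (1 + (p - 1) * x)) ^ (1 / p) :=
    Real.one_le_rpow hcon (by positivity)
  linarith

/-- Bennett's binomial weight inequality: with `w_k = C(k−1−1/p, k−1)`, i.e.
`w_1 = 1` and `w_{k+1} = w_k (k − 1/p)/k`, the sequence `(w_k)` is positive and
decreasing and `(w_1 + ⋯ + w_k)^{p−1} < (kq)^p (w_k^{p−1} − w_{k+1}^{p−1})`. -/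
theorem stmt17 (p q : ℝ) (hp : 1 < p) (hq : 1 / p + 1 / q = 1)
    (w : ℕ → ℝ) (hw1 : w 1 = 1)
    (hrec : ∀ k : ℕ, 1 ≤ k → w (k + 1) = w k * ((k : ℝ) - 1 / p) / k) :
    (∀ k : ℕ, 1 ≤ k → 0 < w k) ∧
    (∀ k : ℕ, 1 ≤ k → w (k + 1) < w k) ∧
    (∀ k : ℕ, 1 ≤ k →
      (∑ j ∈ Finset.Icc 1 k, w j) ^ (p - 1) <
        ((k : ℝ) * q) ^ p * (w k ^ (p - 1) - w (k + 1) ^ (p - 1))) := by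
  have hp0 : 0 < p := by linarith
  have hip : 0 < 1 / p := by positivity
  have hip1 : 1 / p < 1 := by rw [div_lt_one hp0]; exact hp
  have hiq : 1 / q = 1 - 1 / p := by linarith
  have hq0 : 0 < q := by
    have h1 : 0 < 1 / q := by rw [hiq]; linarith
    exact one_div_pos.mp h1
  have hpq : q + p = p * q := by
    field_simp at hq
    linarith [hq]
  have hp1 : p - 1 ≠ 0 := by linarith
  have hqval : q = p / (p - 1) := by
    rw [eq_div_iff hp1]
    linear_combination -hpq
  -- positivity
  have hpos : ∀ k : ℕ, 1 ≤ k → 0 < w k := by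
    intro k hk
    induction k with
    | zero => omega
    | succ n ih =>
      rcases Nat.eq_zero_or_pos n with h | hn
      · subst h
        have e : (0:ℕ) + 1 = 1 := rfl
        rw [e, hw1]; norm_num
      · have hwn := ih hn
        rw [hrec n hn]
        have hn0 : (0:ℝ) < n := by exact_mod_cast hn
        have hn1 : (1:ℝ) ≤ (n:ℝ) := by exact_mod_cast hn
        have : (0:ℝ) < (n:ℝ) - 1 / p := by linarith
        positivity
  have hdec : ∀ k : ℕ, 1 ≤ k → w (k + 1) < w k := by
    intro k hk
    have hk0 : (0:ℝ) < k := by exact_mod_cast hk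
    rw [hrec k hk, div_lt_iff₀ hk0]
    have := hpos k hk
    nlinarith
  refine ⟨hpos, hdec, ?_⟩
  -- sum identity
  have hS : ∀ k : ℕ, 1 ≤ k → ∑ j ∈ Finset.Icc 1 k, w j = (k : ℝ) * q * w (k + 1) := by
    intro k hk
    induction k with
    | zero => omega
    | succ n ih =>
      rcases Nat.eq_zero_or_pos n with h | hn
      · subst h
        have e : (0:ℕ) + 1 = 1 := rfl
        rw [e]
        simp only [Finset.Icc_self, Finset.sum_singleton, hw1]
        rw [hrec 1 le_rfl, hw1]
        push_cast
        have h1 : (1:ℝ) - 1/p = 1/q := by linarith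
        rw [show (1:ℝ) * ((1:ℝ) - 1/p) / 1 = 1 - 1/p by ring, h1]
        field_simp
      · rw [Finset.sum_Icc_succ_top (by omega), ih hn]
        rw [hrec (n+1) (by omega)]
        have hn1 : ((n:ℝ) + 1) ≠ 0 := by positivity
        push_cast
        field_simp
        linear_combination (w (n+1)) * hpq
  intro k hk
  have hk0 : (0:ℝ) < k := by exact_mod_cast hk
  have hk1 : (1:ℝ) ≤ k := by exact_mod_cast hk
  have hc : (0:ℝ) < (k:ℝ) * q := by positivity
  set x : ℝ := 1 / (p * k) with hxdef
  have hx0 : 0 < x := by positivity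
  have hx1 : x < 1 := by
    rw [hxdef, div_lt_one (by positivity)]
    nlinarith
  have hwk := hpos k hk
  have hxeq : 1 - x = ((k:ℝ) - 1/p)/k := by
    rw [hxdef]; field_simp
  have hwrec : w (k + 1) = w k * (1 - x) := by
    rw [hrec k hk, hxeq]; ring
  have hkey := key hp hx0 hx1
  have hx' : (p - 1) * x = 1 / ((k:ℝ) * q) := by
    rw [hxdef, hqval]
    field_simp [hp1]
  rw [hS k hk, hwrec]
  rw [Real.mul_rpow hc.le (by nlinarith : (0:ℝ) ≤ w k * (1 - x)),
      Real.mul_rpow hwk.le (by linarith : (0:ℝ) ≤ 1 - x)]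
  have hcpow : ((k:ℝ) * q) ^ p = ((k:ℝ) * q) ^ (p - 1) * ((k:ℝ) * q) ^ (1:ℝ) := by
    rw [← Real.rpow_add hc]; norm_num
  rw [hcpow, Real.rpow_one]
  have hcp : 0 < ((k:ℝ) * q) ^ (p - 1) := Real.rpow_pos_of_pos hc _
  have hwp : 0 < w k ^ (p - 1) := Real.rpow_pos_of_pos hwk _
  have hxp : 0 < (1 - x) ^ (p - 1) := Real.rpow_pos_of_pos (by linarith) _
  have hmain : (1 - x) ^ (p - 1) < ((k:ℝ) * q) * (1 - (1 - x) ^ (p - 1)) := by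
    have h1 : (1 - x) ^ (p - 1) * (1 + 1 / ((k:ℝ)*q)) < 1 := by
      rw [← hx']; exact hkey
    have h2 : (1 - x) ^ (p - 1) * (((k:ℝ)*q) + 1) < (k:ℝ)*q := by
      have h3 := mul_lt_mul_of_pos_left h1 hc
      calc (1 - x) ^ (p - 1) * (((k:ℝ)*q) + 1)
          = (k:ℝ)*q * ((1 - x) ^ (p - 1) * (1 + 1 / ((k:ℝ)*q))) := by field_simp
        _ < (k:ℝ)*q * 1 := h3
        _ = (k:ℝ)*q := by ring
    nlinarith
  calc ((k:ℝ)*q) ^ (p-1) * (w k ^ (p-1) * (1-x) ^ (p-1))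
      < ((k:ℝ)*q) ^ (p-1) * (w k ^ (p-1) * (((k:ℝ)*q) * (1 - (1-x)^(p-1)))) := by
        apply mul_lt_mul_of_pos_left _ hcp
        exact mul_lt_mul_of_pos_left hmain hwp
    _ = ((k:ℝ)*q) ^ (p-1) * ((k:ℝ)*q) * (w k ^ (p-1) - w k ^ (p-1) * (1-x)^(p-1)) := by ring
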